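/- Let P be a double histogram. Two vertices v, w ∈ V(P) are co-visible if and only if v ∈ I(w) and w ∈ I(v). -/

import Mathlib

open Classical Set

noncomputable section

/-- A *double histogram*: an `x`-monotone orthogonal polygon in general position whose
base line lies on the `x`-axis.  It is described by its bottom columns (over the
breakpoints `xs` with depths `d < 0`) and its top columns (over the breakpoints `ys`
with heights `h > 0`).  A *simple histogram* is the special case `n = 1`, where the
upper boundary is the single (base) edge at height `h 0`. -/
structure DoubleHistogram where
  m : ℕ
  n : ℕ
  hm : 0 < m
  hn : 0 < n
  xs : Fin (m + 1) → ℝ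
  ys : Fin (n + 1) → ℝ
  d : Fin m → ℝ
  h : Fin n → ℝ
  xs_mono : StrictMono xs
  ys_mono : StrictMono ys
  left_eq : ys 0 = xs 0
  right_eq : ys (Fin.last n) = xs (Fin.last m)
  d_neg : ∀ i, d i < 0
  h_pos : ∀ j, 0 < h j
  /-- general position: no three vertices on a horizontal line -/
  d_inj : Function.Injective d
  h_inj : Function.Injective h
  /-- general position: no three vertices on a vertical line -/
  gen_pos : ∀ (i : Fin (m + 1)) (j : Fin (n + 1)), xs i = ys j →
      (i = 0 ∧ j = 0) ∨ (i = Fin.last m ∧ j = Fin.last n)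

/-- Among the reals in `A`, the one of minimum absolute value
(i.e. "closest to the base line"). -/
def closestToBase (A : Set ℝ) : ℝ :=
  sSup {y | y ∈ A ∧ ∀ y' ∈ A, |y| ≤ |y'|}

/-- The leftmost point of `S` among those minimizing the distance `|y|` to the base line. -/
def leftmostLowest (S : Set (ℝ × ℝ)) : ℝ × ℝ :=
  (sInf {x | ∃ y, (x, y) ∈ S ∧ ∀ q ∈ S, |y| ≤ |q.2|},
    closestToBase {y | (sInf {x | ∃ y', (x, y') ∈ S ∧ ∀ q ∈ S, |y'| ≤ |q.2|}, y) ∈ S})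

namespace DoubleHistogram

variable (H : DoubleHistogram)

/-- The polygon `P`, as a closed region of the plane. -/
def region : Set (ℝ × ℝ) :=
  (⋃ i : Fin H.m, Icc (H.xs i.castSucc) (H.xs i.succ) ×ˢ Icc (H.d i) 0) ∪
    ⋃ j : Fin H.n, Icc (H.ys j.castSucc) (H.ys j.succ) ×ˢ Icc 0 (H.h j)

/-- The vertex set `V(P)`. -/
def verts : Set (ℝ × ℝ) :=
  (⋃ i : Fin H.m,
      ({(H.xs i.castSucc, H.d i), (H.xs i.succ, H.d i)} : Set (ℝ × ℝ))) ∪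
    ⋃ j : Fin H.n,
      ({(H.ys j.castSucc, H.h j), (H.ys j.succ, H.h j)} : Set (ℝ × ℝ))

/-- `p` and `q` are co-visible: the axis-parallel rectangle they span lies in `P`. -/
def covisible (p q : ℝ × ℝ) : Prop :=
  Icc (min p.1 q.1) (max p.1 q.1) ×ˢ Icc (min p.2 q.2) (max p.2 q.2) ⊆ H.region

lemma covisible_symm {p q : ℝ × ℝ} (hpq : H.covisible p q) : H.covisible q p := by
  unfold covisible at hpq ⊢
  rwa [min_comm q.1 p.1, max_comm q.1 p.1, min_comm q.2 p.2, max_comm q.2 p.2]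

/-- The (unweighted) visibility graph `G(P)` on the vertices of `P`. -/
def visGraph : SimpleGraph ↥H.verts where
  Adj u v := u ≠ v ∧ H.covisible ↑u ↑v
  symm := ⟨fun _ _ hu => ⟨hu.1.symm, H.covisible_symm hu.2⟩⟩
  loopless := ⟨fun _ hu => hu.1 rfl⟩

/-- The closed neighborhood `N(v)`: `v` together with the vertices it sees. -/
def Nbr (v : ℝ × ℝ) : Set (ℝ × ℝ) :=
  {w | w ∈ H.verts ∧ (w = v ∨ H.covisible v w)}

/-- The abscissa where the leftward horizontal ray from `v` hits the boundary of `P`. -/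
def lhit (v : ℝ × ℝ) : ℝ :=
  sInf {x | x ≤ v.1 ∧ Icc x v.1 ×ˢ ({v.2} : Set ℝ) ⊆ H.region}

/-- The abscissa where the rightward horizontal ray from `v` hits the boundary of `P`. -/
def rhit (v : ℝ × ℝ) : ℝ :=
  sSup {x | v.1 ≤ x ∧ Icc v.1 x ×ˢ ({v.2} : Set ℝ) ⊆ H.region}

/-- The `y`-coordinate, among the vertices of `P` with abscissa `x` lying on the same side
of the base line as `side`, of the one closest to the base line (i.e. the endpoint of the
vertical edge at `x` closer to the base line). -/
def nearY (x : ℝ) (side : ℝ) : ℝ :=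
  if side < 0 then sSup {y | y < 0 ∧ (x, y) ∈ H.verts}
  else sInf {y | 0 < y ∧ (x, y) ∈ H.verts}

/-- The left point `ℓ(v)` (double-histogram version): if the leftward ray from `v` hits the
left boundary then the hit point, otherwise the endpoint of the hit vertical edge closer to
the base line. -/
def lpt (v : ℝ × ℝ) : ℝ × ℝ :=
  if H.lhit v = H.xs 0 then (H.xs 0, v.2) else (H.lhit v, H.nearY (H.lhit v) v.2)

/-- The right point `r(v)` (double-histogram version). -/
def rpt (v : ℝ × ℝ) : ℝ × ℝ :=
  if H.rhit v = H.xs (Fin.last H.m) then (H.xs (Fin.last H.m), v.2)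
  else (H.rhit v, H.nearY (H.rhit v) v.2)

/-- The left base vertex (for a simple histogram, i.e. `n = 1`). -/
def baseL : ℝ × ℝ := (H.xs 0, H.h ⟨0, H.hn⟩)

/-- The right base vertex (for a simple histogram, i.e. `n = 1`). -/
def baseR : ℝ × ℝ := (H.xs (Fin.last H.m), H.h ⟨0, H.hn⟩)

/-- The left point `ℓ(v)` (simple-histogram version): if the leftward ray from `v` hits the
left boundary then the left base vertex, otherwise the endpoint of the hit vertical edge
closer to the base edge. -/
def lptS (v : ℝ × ℝ) : ℝ × ℝ :=
  if H.lhit v = H.xs 0 then H.baseL else (H.lhit v, H.nearY (H.lhit v) v.2)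

/-- The right point `r(v)` (simple-histogram version). -/
def rptS (v : ℝ × ℝ) : ℝ × ℝ :=
  if H.rhit v = H.xs (Fin.last H.m) then H.baseR
  else (H.rhit v, H.nearY (H.rhit v) v.2)

/-- The interval `[p, q]`: all vertices of `P` between `p` and `q`. -/
def ivl (p q : ℝ × ℝ) : Set (ℝ × ℝ) :=
  {u | u ∈ H.verts ∧ p.1 ≤ u.1 ∧ u.1 ≤ q.1}

/-- The interval `I(v) = [ℓ(v), r(v)]` of a vertex (double-histogram version). -/
def Iv (v : ℝ × ℝ) : Set (ℝ × ℝ) := H.ivl (H.lpt v) (H.rpt v)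

/-- The interval `I(v) = [ℓ(v), r(v)]` of a vertex (simple-histogram version). -/
def IvS (v : ℝ × ℝ) : Set (ℝ × ℝ) := H.ivl (H.lptS v) (H.rptS v)

/-- The corresponding vertex `cv(v)`: the unique other vertex sharing a horizontal edge
(equivalently, by general position, the `y`-coordinate) with `v`. -/
def cv (v : ℝ × ℝ) : ℝ × ℝ :=
  (sSup {x | (x, v.2) ∈ H.verts ∧ x ≠ v.1}, v.2)

/-- `v` is a left vertex: the left endpoint of its horizontal edge. -/
def IsLeftVert (v : ℝ × ℝ) : Prop :=
  (∃ i : Fin H.m, v = (H.xs i.castSucc, H.d i)) ∨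
    ∃ j : Fin H.n, v = (H.ys j.castSucc, H.h j)

/-- `v` is a right vertex: the right endpoint of its horizontal edge. -/
def IsRightVert (v : ℝ × ℝ) : Prop :=
  (∃ i : Fin H.m, v = (H.xs i.succ, H.d i)) ∨
    ∃ j : Fin H.n, v = (H.ys j.succ, H.h j)

/-- `v` is an `ℓ`-reflex vertex (a left vertex with interior angle `3π/2`). -/
def IsLReflex (v : ℝ × ℝ) : Prop :=
  (∃ i : Fin H.m, ∃ _ : 0 < (i : ℕ),
      v = (H.xs i.castSucc, H.d i) ∧
        H.d ⟨(i : ℕ) - 1, lt_of_le_of_lt (Nat.sub_le _ _) i.isLt⟩ < H.d i) ∨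
    ∃ j : Fin H.n, ∃ _ : 0 < (j : ℕ),
      v = (H.ys j.castSucc, H.h j) ∧
        H.h j < H.h ⟨(j : ℕ) - 1, lt_of_le_of_lt (Nat.sub_le _ _) j.isLt⟩

/-- `v` is an `r`-reflex vertex (a right vertex with interior angle `3π/2`). -/
def IsRReflex (v : ℝ × ℝ) : Prop :=
  (∃ i : Fin H.m, ∃ hi : (i : ℕ) + 1 < H.m,
      v = (H.xs i.succ, H.d i) ∧ H.d ⟨(i : ℕ) + 1, hi⟩ < H.d i) ∨
    ∃ j : Fin H.n, ∃ hj : (j : ℕ) + 1 < H.n,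
      v = (H.ys j.succ, H.h j) ∧ H.h j < H.h ⟨(j : ℕ) + 1, hj⟩

/-- `v` is a reflex vertex. -/
def IsReflex (v : ℝ × ℝ) : Prop := H.IsLReflex v ∨ H.IsRReflex v

/-- The near dominator `nd(s,t)`: for `t` strictly right of `s`, the rightmost vertex of
`N(s)` to the left of `t`, ties broken towards the base line (symmetric otherwise). -/
def nd (s t : ℝ × ℝ) : ℝ × ℝ :=
  if s.1 < t.1 then
    let nx := sSup {x | (∃ y, (x, y) ∈ H.Nbr s) ∧ x ≤ t.1}
    (nx, closestToBase {y | (nx, y) ∈ H.Nbr s})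
  else
    let nx := sInf {x | (∃ y, (x, y) ∈ H.Nbr s) ∧ t.1 ≤ x}
    (nx, closestToBase {y | (nx, y) ∈ H.Nbr s})

/-- The far dominator `fd(s,t)`: for `t` strictly right of `s`, the leftmost vertex of
`N(s)` to the right of `t`, ties broken towards the base line; if there is no such vertex,
the point `r(s)` (symmetric otherwise). -/
def fd (s t : ℝ × ℝ) : ℝ × ℝ :=
  if s.1 < t.1 then
    if ∃ w ∈ H.Nbr s, t.1 ≤ w.1 then
      let nx := sInf {x | (∃ y, (x, y) ∈ H.Nbr s) ∧ t.1 ≤ x}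
      (nx, closestToBase {y | (nx, y) ∈ H.Nbr s})
    else H.rpt s
  else
    if ∃ w ∈ H.Nbr s, w.1 ≤ t.1 then
      let nx := sSup {x | (∃ y, (x, y) ∈ H.Nbr s) ∧ x ≤ t.1}
      (nx, closestToBase {y | (nx, y) ∈ H.Nbr s})
    else H.lpt s

/-- The sequence `a^i(s)`: `a^0(s) = s`, and `a^i(s)` is the leftmost vertex of
`A^i(s) = {v ∈ N(s) : ℓ(v)_x < ℓ(a^{i-1}(s))_x}` (ties towards the base line),
or `a^{i-1}(s)` if `A^i(s)` is empty. -/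
def aSeq (s : ℝ × ℝ) : ℕ → ℝ × ℝ := fun k =>
  Nat.rec (motive := fun _ => ℝ × ℝ) s
    (fun _ prev =>
      let A : Set (ℝ × ℝ) := {v | v ∈ H.Nbr s ∧ (H.lpt v).1 < (H.lpt prev).1}
      if A = ∅ then prev
      else
        let ax := sInf {x | ∃ y, (x, y) ∈ A}
        (ax, closestToBase {y | (ax, y) ∈ A}))
    k

/-- The sequence `b^i(s)`: `b^0(s) = s`, and `b^i(s)` is the rightmost vertex of
`B^i(s) = {v ∈ N(s) : r(v)_x > r(b^{i-1}(s))_x}` (ties towards the base line),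
or `b^{i-1}(s)` if `B^i(s)` is empty. -/
def bSeq (s : ℝ × ℝ) : ℕ → ℝ × ℝ := fun k =>
  Nat.rec (motive := fun _ => ℝ × ℝ) s
    (fun _ prev =>
      let B : Set (ℝ × ℝ) := {v | v ∈ H.Nbr s ∧ (H.rpt prev).1 < (H.rpt v).1}
      if B = ∅ then prev
      else
        let bx := sSup {x | ∃ y, (x, y) ∈ B}
        (bx, closestToBase {y | (bx, y) ∈ B}))
    k

/-- The pair of the `k`-th bottom dominator `bd^k(s)` and `k`-th top dominator `td^k(s)`:
`bd^0(s) = td^0(s) = s`; for `k > 0`, with `I^k(s) = I(bd^{k-1}(s)) ∪ I(td^{k-1}(s))`,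
`bd^k(s)` is the leftmost vertex of `I^k(s)⁻` minimizing the distance to the base line,
and `td^k(s)` the leftmost vertex of `I^k(s)⁺` minimizing the distance to the base line;
if one of the two sets is empty, the corresponding dominator equals the other one. -/
def bdtd (s : ℝ × ℝ) : ℕ → (ℝ × ℝ) × (ℝ × ℝ) := fun k =>
  Nat.rec (motive := fun _ => (ℝ × ℝ) × (ℝ × ℝ)) (s, s)
    (fun _ p =>
      let J : Set (ℝ × ℝ) := H.Iv p.1 ∪ H.Iv p.2
      let Jm : Set (ℝ × ℝ) := {v | v ∈ J ∧ v.2 < 0}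
      let Jp : Set (ℝ × ℝ) := {v | v ∈ J ∧ 0 < v.2}
      if Jm = ∅ then (leftmostLowest Jp, leftmostLowest Jp)
      else if Jp = ∅ then (leftmostLowest Jm, leftmostLowest Jm)
      else (leftmostLowest Jm, leftmostLowest Jp))
    k

/-- The `k`-th interval `I^k(s)`: `I^0(s) = {s}` and
`I^{k+1}(s) = I(bd^k(s)) ∪ I(td^k(s))`. -/
def Ipow (s : ℝ × ℝ) : ℕ → Set (ℝ × ℝ) := fun k =>
  Nat.rec (motive := fun _ => Set (ℝ × ℝ)) {s}
    (fun k _ => H.Iv (H.bdtd s k).1 ∪ H.Iv (H.bdtd s k).2) k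

/-- `w` lies on a shortest path from `s` to `t` in the visibility graph. -/
def OnShortestPath (s t w : ↥H.verts) : Prop :=
  ∃ p : H.visGraph.Walk s t, p.length = H.visGraph.dist s t ∧ w ∈ p.support

end DoubleHistogram

/-- A routing scheme for a graph `G`: every vertex carries a binary label and a binary
routing table, and the routing function maps (link table of the current vertex, routing
table of the current vertex, label of the target, current header) to the next vertex
together with the new header. -/
structure RoutingScheme {V : Type} (G : SimpleGraph V) where
  lab : V → List Bool
  tab : V → List Bool
  route : Set (List Bool) → List Bool → List Bool → List Bool → V × List Bool

namespace RoutingScheme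

variable {V : Type} {G : SimpleGraph V} (R : RoutingScheme G)

/-- One routing step at vertex `p` with header `h`, towards the target `t`: the routing
function is applied to the link table of `p` (the labels of its closed neighborhood),
the routing table of `p`, the label of `t` and the header `h`. -/
def step (t p : V) (h : List Bool) : V × List Bool :=
  R.route (R.lab '' {w | w = p ∨ G.Adj p w}) (R.tab p) (R.lab t) h

/-- The routing sequence from `s` towards `t`, starting with the empty header. -/
def seq (s t : V) : ℕ → V × List Bool := fun k =>
  Nat.rec (motive := fun _ => V × List Bool) (s, ([] : List Bool))
    (fun _ q => R.step t q.1 q.2) k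

end RoutingScheme
namespace DoubleHistogram

variable (H : DoubleHistogram)

lemma mem_region_iff {p : ℝ × ℝ} :
    p ∈ H.region ↔
      (∃ i : Fin H.m, (H.xs i.castSucc ≤ p.1 ∧ p.1 ≤ H.xs i.succ) ∧ H.d i ≤ p.2 ∧ p.2 ≤ 0) ∨
      ∃ j : Fin H.n, (H.ys j.castSucc ≤ p.1 ∧ p.1 ≤ H.ys j.succ) ∧ 0 ≤ p.2 ∧ p.2 ≤ H.h j := by
  simp only [region, Set.mem_union, Set.mem_iUnion, Set.mem_prod, Set.mem_Icc]

lemma verts_subset_region : H.verts ⊆ H.region := by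
  intro p hp
  rw [mem_region_iff]
  rcases hp with hp | hp <;> simp only [mem_iUnion, Set.mem_insert_iff,
    Set.mem_singleton_iff] at hp
  · obtain ⟨i, hi | hi⟩ := hp <;> subst hi <;>
      exact Or.inl ⟨i, ⟨by simp [le_of_lt (H.xs_mono (Fin.castSucc_lt_succ : i.castSucc < i.succ))],
        by simp [le_of_lt (H.xs_mono (Fin.castSucc_lt_succ : i.castSucc < i.succ))]⟩, le_refl _, (H.d_neg i).le⟩
  · obtain ⟨j, hj | hj⟩ := hp <;> subst hj <;>
      exact Or.inr ⟨j, ⟨by simp [le_of_lt (H.ys_mono (Fin.castSucc_lt_succ : j.castSucc < j.succ))],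
        by simp [le_of_lt (H.ys_mono (Fin.castSucc_lt_succ : j.castSucc < j.succ))]⟩, (H.h_pos j).le, le_refl _⟩

lemma region_x_bounds {p : ℝ × ℝ} (hp : p ∈ H.region) :
    H.xs 0 ≤ p.1 ∧ p.1 ≤ H.xs (Fin.last H.m) := by
  rw [mem_region_iff] at hp
  rcases hp with ⟨i, hxi, _⟩ | ⟨j, hxj, _⟩
  · exact ⟨le_trans (H.xs_mono.monotone (Fin.zero_le _)) hxi.1,
      le_trans hxi.2 (H.xs_mono.monotone (Fin.le_last _))⟩
  · constructor
    · rw [← H.left_eq]; exact le_trans (H.ys_mono.monotone (Fin.zero_le _)) hxj.1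
    · rw [← H.right_eq]; exact le_trans hxj.2 (H.ys_mono.monotone (Fin.le_last _))

lemma isClosed_region : IsClosed H.region := by
  unfold region
  exact IsClosed.union
    (isClosed_iUnion_of_finite fun i => (isClosed_Icc).prod isClosed_Icc)
    (isClosed_iUnion_of_finite fun j => (isClosed_Icc).prod isClosed_Icc)

lemma prod_singleton_subset_iff {a b y : ℝ} {U : Set (ℝ × ℝ)} :
    Icc a b ×ˢ ({y} : Set ℝ) ⊆ U ↔ ∀ t, a ≤ t → t ≤ b → (t, y) ∈ U := by
  constructor
  · intro h t h1 h2; exact h ⟨⟨h1, h2⟩, rfl⟩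
  · rintro h ⟨t, y'⟩ ⟨ht, hy⟩
    rw [Set.mem_singleton_iff] at hy; subst hy; exact h t ht.1 ht.2

lemma self_mem_lset (v : ℝ × ℝ) (hv : v ∈ H.verts) :
    v.1 ∈ {x | x ≤ v.1 ∧ Icc x v.1 ×ˢ ({v.2} : Set ℝ) ⊆ H.region} := by
  refine ⟨le_refl _, ?_⟩
  rw [prod_singleton_subset_iff]
  intro t h1 h2
  have : t = v.1 := le_antisymm h2 h1
  subst this
  exact H.verts_subset_region hv

lemma self_mem_rset (v : ℝ × ℝ) (hv : v ∈ H.verts) :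
    v.1 ∈ {x | v.1 ≤ x ∧ Icc v.1 x ×ˢ ({v.2} : Set ℝ) ⊆ H.region} := by
  refine ⟨le_refl _, ?_⟩
  rw [prod_singleton_subset_iff]
  intro t h1 h2
  have : t = v.1 := le_antisymm h2 h1
  subst this
  exact H.verts_subset_region hv

lemma lset_bddBelow (v : ℝ × ℝ) :
    BddBelow {x | x ≤ v.1 ∧ Icc x v.1 ×ˢ ({v.2} : Set ℝ) ⊆ H.region} :=
  ⟨H.xs 0, fun x hx => (H.region_x_bounds
    (show ((x : ℝ), v.2) ∈ H.region from hx.2 ⟨⟨le_refl x, hx.1⟩, rfl⟩)).1⟩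

lemma rset_bddAbove (v : ℝ × ℝ) :
    BddAbove {x | v.1 ≤ x ∧ Icc v.1 x ×ˢ ({v.2} : Set ℝ) ⊆ H.region} :=
  ⟨H.xs (Fin.last H.m), fun x hx => (H.region_x_bounds
    (show ((x : ℝ), v.2) ∈ H.region from hx.2 ⟨⟨hx.1, le_refl x⟩, rfl⟩)).2⟩

lemma lhit_le (v : ℝ × ℝ) (hv : v ∈ H.verts) : H.lhit v ≤ v.1 :=
  csInf_le (H.lset_bddBelow v) (H.self_mem_lset v hv)

lemma le_rhit (v : ℝ × ℝ) (hv : v ∈ H.verts) : v.1 ≤ H.rhit v :=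
  le_csSup (H.rset_bddAbove v) (H.self_mem_rset v hv)

lemma lhit_seg (v : ℝ × ℝ) (hv : v ∈ H.verts) :
    ∀ t, H.lhit v ≤ t → t ≤ v.1 → (t, v.2) ∈ H.region := by
  intro t ht1 ht2
  by_contra hC
  have hCc : IsClosed {x : ℝ | (x, v.2) ∈ H.region} :=
    H.isClosed_region.preimage (Continuous.prodMk continuous_id continuous_const)
  obtain ⟨ε, hε, hball⟩ := Metric.isOpen_iff.1 hCc.isOpen_compl t hC
  have hne : Set.Nonempty {x | x ≤ v.1 ∧ Icc x v.1 ×ˢ ({v.2} : Set ℝ) ⊆ H.region} :=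
    ⟨v.1, H.self_mem_lset v hv⟩
  have hlt : H.lhit v < t + ε := lt_of_le_of_lt ht1 (by linarith)
  obtain ⟨s, hs, hst⟩ := exists_lt_of_csInf_lt hne hlt
  rcases le_or_gt s t with h | h
  · exact hC (hs.2 ⟨⟨h, ht2⟩, rfl⟩)
  · have hmem : s ∈ Metric.ball t ε := by
      rw [Metric.mem_ball, Real.dist_eq, abs_sub_lt_iff]
      constructor <;> linarith
    exact hball hmem (hs.2 ⟨⟨le_refl s, hs.1⟩, rfl⟩)

lemma rhit_seg (v : ℝ × ℝ) (hv : v ∈ H.verts) :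
    ∀ t, v.1 ≤ t → t ≤ H.rhit v → (t, v.2) ∈ H.region := by
  intro t ht1 ht2
  by_contra hC
  have hCc : IsClosed {x : ℝ | (x, v.2) ∈ H.region} :=
    H.isClosed_region.preimage (Continuous.prodMk continuous_id continuous_const)
  obtain ⟨ε, hε, hball⟩ := Metric.isOpen_iff.1 hCc.isOpen_compl t hC
  have hne : Set.Nonempty {x | v.1 ≤ x ∧ Icc v.1 x ×ˢ ({v.2} : Set ℝ) ⊆ H.region} :=
    ⟨v.1, H.self_mem_rset v hv⟩
  have hlt : t - ε < H.rhit v := lt_of_lt_of_le (by linarith) ht2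
  obtain ⟨s, hs, hst⟩ := exists_lt_of_lt_csSup hne hlt
  rcases le_or_gt t s with h | h
  · exact hC (hs.2 ⟨⟨ht1, h⟩, rfl⟩)
  · have hmem : s ∈ Metric.ball t ε := by
      rw [Metric.mem_ball, Real.dist_eq, abs_sub_lt_iff]
      constructor <;> linarith
    exact hball hmem (hs.2 ⟨⟨hs.1, le_refl s⟩, rfl⟩)

lemma covisible_lhit (v w : ℝ × ℝ) (hv : v ∈ H.verts)
    (hcov : H.covisible v w) : H.lhit v ≤ w.1 := by
  rcases le_total v.1 w.1 with h | h
  · exact le_trans (H.lhit_le v hv) h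
  · apply csInf_le (H.lset_bddBelow v)
    refine ⟨h, ?_⟩
    rw [prod_singleton_subset_iff]
    intro t h1 h2
    exact hcov ⟨⟨le_trans (min_le_right _ _) h1, le_trans h2 (le_max_left _ _)⟩,
      min_le_left _ _, le_max_left _ _⟩

lemma covisible_rhit (v w : ℝ × ℝ) (hv : v ∈ H.verts)
    (hcov : H.covisible v w) : w.1 ≤ H.rhit v := by
  rcases le_total w.1 v.1 with h | h
  · exact le_trans h (H.le_rhit v hv)
  · apply le_csSup (H.rset_bddAbove v)
    refine ⟨h, ?_⟩
    rw [prod_singleton_subset_iff]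
    intro t h1 h2
    exact hcov ⟨⟨le_trans (min_le_left _ _) h1, le_trans h2 (le_max_right _ _)⟩,
      min_le_left _ _, le_max_left _ _⟩

lemma seg_covers (v w : ℝ × ℝ) (hv : v ∈ H.verts)
    (h1 : H.lhit v ≤ w.1) (h2 : w.1 ≤ H.rhit v) :
    ∀ t, min v.1 w.1 ≤ t → t ≤ max v.1 w.1 → (t, v.2) ∈ H.region := by
  intro t ht1 ht2
  rcases le_total t v.1 with htv | htv
  · exact H.lhit_seg v hv t (le_trans (le_min (H.lhit_le v hv) h1) ht1) htv
  · exact H.rhit_seg v hv t htv (le_trans ht2 (max_le (H.le_rhit v hv) h2))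

lemma rect_subset (a b y1 y2 : ℝ) (hy : y1 ≤ y2)
    (h1 : ∀ t, a ≤ t → t ≤ b → (t, y1) ∈ H.region)
    (h2 : ∀ t, a ≤ t → t ≤ b → (t, y2) ∈ H.region) :
    Icc a b ×ˢ Icc y1 y2 ⊆ H.region := by
  rintro ⟨x, y⟩ ⟨hx, hy1, hy2⟩
  rw [Set.mem_Icc] at hx
  rcases le_or_gt y 0 with hy0 | hy0
  · have hm := h1 x hx.1 hx.2
    rw [mem_region_iff] at hm ⊢
    rcases hm with ⟨i, hxi, hdi⟩ | ⟨j, hxj, h0j⟩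
    · exact Or.inl ⟨i, hxi, by constructor <;> [skip; exact hy0] <;> dsimp only <;> linarith [hdi.1]⟩
    · exact Or.inr ⟨j, hxj, by dsimp only at h0j ⊢; constructor <;> linarith [h0j.1, h0j.2, (H.h_pos j).le]⟩
  · have hm := h2 x hx.1 hx.2
    rw [mem_region_iff] at hm ⊢
    rcases hm with ⟨i, hxi, hdi⟩ | ⟨j, hxj, h0j⟩
    · exact absurd hy0 (by dsimp only at hdi; push_neg; linarith [hdi.2])
    · exact Or.inr ⟨j, hxj, by dsimp only at h0j ⊢; constructor <;> linarith [h0j.1, h0j.2]⟩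

lemma lpt_fst (v : ℝ × ℝ) : (H.lpt v).1 = H.lhit v := by
  unfold lpt; split
  · next h => simp [← h]
  · rfl

lemma rpt_fst (v : ℝ × ℝ) : (H.rpt v).1 = H.rhit v := by
  unfold rpt; split
  · next h => simp [← h]
  · rfl

end DoubleHistogram
/-- In a double histogram, two vertices `v, w` are co-visible if and only
if `v ∈ I(w)` and `w ∈ I(v)`. -/
theorem mutually_visible_iff
    (H : DoubleHistogram) (v w : ℝ × ℝ) (hv : v ∈ H.verts) (hw : w ∈ H.verts) :
    H.covisible v w ↔ v ∈ H.Iv w ∧ w ∈ H.Iv v := by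
  constructor
  · intro hcov
    refine ⟨⟨hv, ?_, ?_⟩, hw, ?_, ?_⟩
    · rw [H.lpt_fst]; exact H.covisible_lhit w v hw (H.covisible_symm hcov)
    · rw [H.rpt_fst]; exact H.covisible_rhit w v hw (H.covisible_symm hcov)
    · rw [H.lpt_fst]; exact H.covisible_lhit v w hv hcov
    · rw [H.rpt_fst]; exact H.covisible_rhit v w hv hcov
  · rintro ⟨⟨-, hl1, hr1⟩, -, hl2, hr2⟩
    rw [H.lpt_fst] at hl1 hl2
    rw [H.rpt_fst] at hr1 hr2
    have segv : ∀ t, min v.1 w.1 ≤ t → t ≤ max v.1 w.1 → (t, v.2) ∈ H.region :=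
      H.seg_covers v w hv hl2 hr2
    have segw : ∀ t, min v.1 w.1 ≤ t → t ≤ max v.1 w.1 → (t, w.2) ∈ H.region := by
      rw [min_comm, max_comm]; exact H.seg_covers w v hw hl1 hr1
    show Icc _ _ ×ˢ Icc _ _ ⊆ H.region
    rcases le_total v.2 w.2 with h | h
    · rw [min_eq_left h, max_eq_right h]
      exact H.rect_subset _ _ _ _ h segv segw
    · rw [min_eq_right h, max_eq_left h]
      exact H.rect_subset _ _ _ _ h segw segv
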